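/- Let k ∈ ℕ, let M ∈ 𝔽₂^{k×k} be skew-symmetric, and let w ∈ 𝔽₂^k. For p ∈ 𝔽₂^k define the linear operator S_p on ℝ^{𝔽₂^k} by S_p := (−1)^{Q_M(p)+wᵀp}·X_p Z_{Mp}. Then p ↦ S_p is a representation of the additive group 𝔽₂^k: for all p, p' ∈ 𝔽₂^k, S_p ∘ S_{p'} = S_{p+p'}. -/
import Mathlib


open Matrix

/-- The quadratic form `Q_M(x) = xᵀ M̃ x` where `M̃` is the strictly upper-triangular
part of `M`. -/
def Qform (k : ℕ) (M : Matrix (Fin k) (Fin k) (ZMod 2)) (x : Fin k → ZMod 2) : ZMod 2 :=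
  x ⬝ᵥ (Matrix.of fun i j : Fin k => if (i : ℕ) < (j : ℕ) then M i j else 0).mulVec x

/-- The translation operator `(X_p f)(x) = f(x + p)` on `ℝ^{𝔽₂^k}`. -/
def Xop (k : ℕ) (p : Fin k → ZMod 2) (f : (Fin k → ZMod 2) → ℝ) :
    (Fin k → ZMod 2) → ℝ :=
  fun x => f (x + p)

/-- The modulation operator `(Z_q f)(x) = (−1)^{qᵀx}·f(x)` on `ℝ^{𝔽₂^k}`. -/
def Zop (k : ℕ) (q : Fin k → ZMod 2) (f : (Fin k → ZMod 2) → ℝ) :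
    (Fin k → ZMod 2) → ℝ :=
  fun x => (-1 : ℝ) ^ (q ⬝ᵥ x).val * f x

/-- The operator `S_p := (−1)^{Q_M(p)+wᵀp}·X_p Z_{Mp}` on `ℝ^{𝔽₂^k}`. -/
noncomputable def Sop (k : ℕ) (M : Matrix (Fin k) (Fin k) (ZMod 2))
    (w : Fin k → ZMod 2) (p : Fin k → ZMod 2) (f : (Fin k → ZMod 2) → ℝ) :
    (Fin k → ZMod 2) → ℝ :=
  fun x => (-1 : ℝ) ^ (Qform k M p + w ⬝ᵥ p).val * Xop k p (Zop k (M.mulVec p) f) x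

lemma chi_add (a b : ZMod 2) :
    (-1 : ℝ) ^ (a + b).val = (-1 : ℝ) ^ a.val * (-1 : ℝ) ^ b.val := by
  rw [ZMod.val_add, ← neg_one_pow_eq_pow_mod_two, pow_add]

lemma upper_decomp (k : ℕ) (M : Matrix (Fin k) (Fin k) (ZMod 2))
    (hdiag : ∀ i, M i i = 0) (hsym : ∀ i j, M i j = M j i) :
    (Matrix.of fun i j : Fin k => if (i : ℕ) < (j : ℕ) then M i j else 0) +
      (Matrix.of fun i j : Fin k => if (i : ℕ) < (j : ℕ) then M i j else 0)ᵀ = M := by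
  ext i j
  simp only [Matrix.add_apply, Matrix.transpose_apply, Matrix.of_apply]
  rcases lt_trichotomy (i : ℕ) (j : ℕ) with h | h | h
  · simp [h, not_lt.2 h.le]
  · have : i = j := Fin.ext h
    subst this
    simp [hdiag]
  · simp [h, not_lt.2 h.le, hsym i j]

lemma cross_term (k : ℕ) (M : Matrix (Fin k) (Fin k) (ZMod 2))
    (hdiag : ∀ i, M i i = 0) (hsym : ∀ i j, M i j = M j i)
    (p p' : Fin k → ZMod 2) :
    p ⬝ᵥ (Matrix.of fun i j : Fin k => if (i : ℕ) < (j : ℕ) then M i j else 0).mulVec p' +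
      p' ⬝ᵥ (Matrix.of fun i j : Fin k => if (i : ℕ) < (j : ℕ) then M i j else 0).mulVec p =
    p ⬝ᵥ M.mulVec p' := by
  set N := (Matrix.of fun i j : Fin k => if (i : ℕ) < (j : ℕ) then M i j else 0) with hN
  have h2 : p' ⬝ᵥ N.mulVec p = p ⬝ᵥ Nᵀ.mulVec p' := by
    rw [Matrix.mulVec_transpose, Matrix.dotProduct_mulVec, dotProduct_comm]
  rw [h2, ← dotProduct_add, ← Matrix.add_mulVec, upper_decomp k M hdiag hsym]

lemma self_zero (k : ℕ) (M : Matrix (Fin k) (Fin k) (ZMod 2))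
    (hdiag : ∀ i, M i i = 0) (hsym : ∀ i j, M i j = M j i)
    (p : Fin k → ZMod 2) : p ⬝ᵥ M.mulVec p = 0 := by
  rw [← cross_term k M hdiag hsym p p]
  exact CharTwo.add_self_eq_zero _

lemma key (k : ℕ) (M : Matrix (Fin k) (Fin k) (ZMod 2))
    (hdiag : ∀ i, M i i = 0) (hsym : ∀ i j, M i j = M j i)
    (w p p' x : Fin k → ZMod 2) :
    ((Qform k M p + w ⬝ᵥ p) + M.mulVec p ⬝ᵥ (x + p)) +
      ((Qform k M p' + w ⬝ᵥ p') + M.mulVec p' ⬝ᵥ (x + (p + p'))) =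
    (Qform k M (p + p') + w ⬝ᵥ (p + p')) + M.mulVec (p + p') ⬝ᵥ (x + (p + p')) := by
  have hQ : Qform k M (p + p') = Qform k M p + Qform k M p' + p ⬝ᵥ M.mulVec p' := by
    unfold Qform
    rw [← cross_term k M hdiag hsym p p']
    simp only [Matrix.mulVec_add, dotProduct_add, add_dotProduct]
    ring
  have hpp : M.mulVec p ⬝ᵥ p = 0 := by
    rw [dotProduct_comm]; exact self_zero k M hdiag hsym p
  have hpp' : M.mulVec p' ⬝ᵥ p' = 0 := by
    rw [dotProduct_comm]; exact self_zero k M hdiag hsym p'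
  have hMsym : Mᵀ = M := by ext i j; exact hsym j i
  have hcross : M.mulVec p' ⬝ᵥ p = p ⬝ᵥ M.mulVec p' := dotProduct_comm _ _
  have hcross' : M.mulVec p ⬝ᵥ p' = p ⬝ᵥ M.mulVec p' := by
    rw [dotProduct_comm, Matrix.dotProduct_mulVec, ← Matrix.mulVec_transpose, hMsym]
    exact dotProduct_comm _ _
  have h2 : p ⬝ᵥ M.mulVec p' + p ⬝ᵥ M.mulVec p' = 0 := CharTwo.add_self_eq_zero _
  simp only [hQ, dotProduct_add, add_dotProduct, Matrix.mulVec_add,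
    hpp, hpp', hcross, hcross']
  have h4 : (2 : ZMod 2) = 0 := by decide
  linear_combination (-(p ⬝ᵥ M.mulVec p')) * h4

/-- For a skew-symmetric `M ∈ 𝔽₂^{k×k}` and `w ∈ 𝔽₂^k`, the map
`p ↦ S_p = (−1)^{Q_M(p)+wᵀp}·X_p Z_{Mp}` is a representation of the additive group
`𝔽₂^k`: `S_p ∘ S_{p'} = S_{p+p'}`. -/
theorem stmt_12 (k : ℕ) (M : Matrix (Fin k) (Fin k) (ZMod 2))
    (hdiag : ∀ i, M i i = 0) (hsym : ∀ i j, M i j = M j i)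
    (w : Fin k → ZMod 2) :
    ∀ p p' : Fin k → ZMod 2, Sop k M w p ∘ Sop k M w p' = Sop k M w (p + p') := by
  intro p p'
  funext f x
  simp only [Function.comp_apply, Sop, Xop, Zop]
  have hL : ∀ (a b c d : ZMod 2) (r : ℝ),
      (-1 : ℝ) ^ a.val * ((-1 : ℝ) ^ b.val * ((-1 : ℝ) ^ c.val * ((-1 : ℝ) ^ d.val * r))) =
        (-1 : ℝ) ^ ((a + b) + (c + d)).val * r := by
    intro a b c d r
    rw [chi_add, chi_add, chi_add]; ring
  have hR : ∀ (a b : ZMod 2) (r : ℝ),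
      (-1 : ℝ) ^ a.val * ((-1 : ℝ) ^ b.val * r) = (-1 : ℝ) ^ (a + b).val * r := by
    intro a b r
    rw [chi_add, mul_assoc]
  rw [show x + p + p' = x + (p + p') from add_assoc x p p']
  rw [hL, hR, key k M hdiag hsym w p p' x]
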